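/- For constants a, b ≥ 0, define h_{a,b} : [0,∞) → [0,∞) by h_{a,b}(u) = b·u^{3/2} for u ≤ a²/b² and h_{a,b}(u) = (3/2)·a·u − a³/(2b²) for u ≥ a²/b². Then h_{a,b} is convex, and min{a·u, b·u^{3/2}} ≤ h_{a,b}(u) ≤ min{(3/2)·a·u, b·u^{3/2}} for all u ≥ 0. -/

import Mathlib

open Real

/-- For `a, b ≥ 0`, the function `h_{a,b}` defined by `h_{a,b}(u) = b·u^{3/2}` for
`u ≤ a²/b²` and `h_{a,b}(u) = (3/2)·a·u − a³/(2b²)` for `u ≥ a²/b²` (with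
`h_{a,0} ≡ 0`) is convex on `[0,∞)` and satisfies
`min{a·u, b·u^{3/2}} ≤ h_{a,b}(u) ≤ min{(3/2)·a·u, b·u^{3/2}}` for all `u ≥ 0`. -/
theorem stmt0 (a b : ℝ) (ha : 0 ≤ a) (hb : 0 ≤ b)
    (h : ℝ → ℝ)
    (hdef : ∀ u : ℝ, h u =
      if b = 0 then 0
      else if u ≤ a ^ 2 / b ^ 2 then b * u ^ ((3 : ℝ) / 2)
      else (3 / 2) * a * u - a ^ 3 / (2 * b ^ 2)) :
    ConvexOn ℝ (Set.Ici (0 : ℝ)) h ∧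
      (∀ u : ℝ, 0 ≤ u →
        min (a * u) (b * u ^ ((3 : ℝ) / 2)) ≤ h u ∧
          h u ≤ min ((3 / 2) * a * u) (b * u ^ ((3 : ℝ) / 2))) := by
  rcases eq_or_lt_of_le hb with hb0 | hbpos
  · -- b = 0
    have hh : ∀ u, h u = 0 := by intro u; rw [hdef, if_pos hb0.symm]
    refine ⟨⟨convex_Ici 0, ?_⟩, ?_⟩
    · intro x hx y hy p q hp hq hpq
      simp [hh]
    · intro u hu
      constructor
      · rw [hh]; calc min (a*u) (b * u ^ ((3:ℝ)/2)) ≤ b * u ^ ((3:ℝ)/2) := min_le_right _ _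
          _ = 0 := by rw [← hb0]; ring
      · rw [hh]
        exact le_min (by positivity) (by rw [← hb0]; simp)
  · -- b > 0
    have hne : b ≠ 0 := ne_of_gt hbpos
    set c : ℝ := a ^ 2 / b ^ 2 with hc
    have hc0 : 0 ≤ c := by positivity
    have hdef' : ∀ u, h u = if u ≤ c then b * u ^ ((3:ℝ)/2)
        else (3/2) * a * u - a ^ 3 / (2 * b ^ 2) := by
      intro u; rw [hdef, if_neg hne]
    -- basic rpow facts
    have hcube : ∀ u : ℝ, 0 ≤ u → u ^ ((3:ℝ)/2) = Real.sqrt u ^ 3 := by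
      intro u hu
      rw [Real.sqrt_eq_rpow, ← Real.rpow_natCast (u ^ ((1:ℝ)/2)) 3,
        ← Real.rpow_mul hu]
      norm_num
    have hsqc : Real.sqrt c = a / b := by
      rw [hc, show a ^ 2 / b ^ 2 = (a / b) ^ 2 by ring, Real.sqrt_sq (by positivity)]
    have hbsqc : b * Real.sqrt c = a := by
      rw [hsqc]; field_simp
    -- tangent inequality : line ≤ curve on [0, ∞)
    have key : ∀ t : ℝ, 0 ≤ t → (3/2) * a * t ^ 2 - a ^ 3 / (2 * b ^ 2) ≤ b * t ^ 3 := by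
      intro t ht
      have hdiv : a ^ 3 / (2 * b ^ 2) * (2 * b ^ 2) = a ^ 3 := by field_simp
      nlinarith [mul_nonneg (sq_nonneg (b*t - a)) (by positivity : (0:ℝ) ≤ 2*b*t + a),
        sq_nonneg b, hbpos, mul_pos hbpos hbpos]
    have keyu : ∀ u : ℝ, 0 ≤ u → (3/2) * a * u - a ^ 3 / (2 * b ^ 2) ≤ b * u ^ ((3:ℝ)/2) := by
      intro u hu
      have := key (Real.sqrt u) (Real.sqrt_nonneg u)
      rw [Real.sq_sqrt hu] at this
      rw [hcube u hu]; exact this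
    -- the bounds
    have bounds : ∀ u : ℝ, 0 ≤ u →
        min (a * u) (b * u ^ ((3 : ℝ) / 2)) ≤ h u ∧
          h u ≤ min ((3 / 2) * a * u) (b * u ^ ((3 : ℝ) / 2)) := by
      intro u hu
      have husq : Real.sqrt u * Real.sqrt u = u := Real.mul_self_sqrt hu
      have hcu : u ^ ((3:ℝ)/2) = u * Real.sqrt u := by
        rw [hcube u hu, pow_succ, Real.sq_sqrt hu]
      rw [hdef']
      split_ifs with huc
      · -- u ≤ c : h u = curve
        have hsle : b * Real.sqrt u ≤ a := by
          have : Real.sqrt u ≤ Real.sqrt c := Real.sqrt_le_sqrt huc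
          rw [hsqc] at this
          calc b * Real.sqrt u ≤ b * (a / b) := by nlinarith
            _ = a := by field_simp
        refine ⟨min_le_right _ _, le_min ?_ le_rfl⟩
        rw [hcu]
        nlinarith [Real.sqrt_nonneg u]
      · -- u > c : h u = line
        push_neg at huc
        have hage : a ≤ b * Real.sqrt u := by
          have : Real.sqrt c ≤ Real.sqrt u := Real.sqrt_le_sqrt huc.le
          rw [hsqc] at this
          calc a = b * (a / b) := by field_simp
            _ ≤ b * Real.sqrt u := by nlinarith
        have h1 : a * u ≤ (3/2) * a * u - a ^ 3 / (2 * b ^ 2) := by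
          have : a ^ 3 / (2 * b ^ 2) ≤ (1/2) * a * u := by
            rw [div_le_iff₀ (by positivity)]
            have := mul_le_mul_of_nonneg_left huc.le ha
            calc a ^ 3 = a * (a^2/b^2) * (2 * b^2) / 2 := by field_simp
              _ ≤ a * u * (2*b^2) / 2 := by
                  apply div_le_div_of_nonneg_right ?_ ?_ <;> nlinarith [sq_nonneg b]
              _ = (1/2)*a*u*(2*b^2) := by ring
          linarith
        refine ⟨le_trans (min_le_left _ _) h1, le_min ?_ (keyu u hu)⟩
        nlinarith [div_nonneg (by positivity : (0:ℝ) ≤ a^3) (by positivity : (0:ℝ) ≤ 2*b^2)]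
    refine ⟨?_, bounds⟩
    -- convexity
    have fc : b * c ^ ((3:ℝ)/2) = (3/2) * a * c - a ^ 3 / (2 * b ^ 2) := by
      rw [hcube c hc0, hsqc, hc]
      field_simp
      ring
    -- derivative of h on (0, ∞)
    have hder : ∀ u ∈ Set.Ioi (0:ℝ), HasDerivAt h (3/2 * min (b * Real.sqrt u) a) u := by
      intro u hu
      simp only [Set.mem_Ioi] at hu
      have curveDeriv : ∀ v : ℝ, 0 < v →
          HasDerivAt (fun x => b * x ^ ((3:ℝ)/2)) (3/2 * (b * Real.sqrt v)) v := by
        intro v hv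
        have H := (Real.hasDerivAt_rpow_const (x := v) (p := (3:ℝ)/2)
          (Or.inl (ne_of_gt hv))).const_mul b
        have : b * ((3:ℝ)/2 * v ^ ((3:ℝ)/2 - 1)) = 3/2 * (b * Real.sqrt v) := by
          rw [show (3:ℝ)/2 - 1 = 1/2 by norm_num, ← Real.sqrt_eq_rpow]; ring
        rwa [this] at H
      have lineDeriv : ∀ v : ℝ,
          HasDerivAt (fun x => (3/2) * a * x - a ^ 3 / (2 * b ^ 2)) (3/2 * a) v := by
        intro v
        simpa using ((hasDerivAt_id v).const_mul ((3:ℝ)/2 * a)).sub_const (a ^ 3 / (2 * b ^ 2))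
      rcases lt_trichotomy u c with hlt | heq | hgt
      · -- u < c
        have hmin : min (b * Real.sqrt u) a = b * Real.sqrt u := by
          apply min_eq_left
          have : Real.sqrt u ≤ Real.sqrt c := Real.sqrt_le_sqrt hlt.le
          rw [hsqc] at this; nlinarith
        rw [hmin]
        apply (curveDeriv u hu).congr_of_eventuallyEq
        filter_upwards [Iio_mem_nhds hlt] with x hx
        rw [hdef', if_pos (le_of_lt hx)]
      · -- u = c
        have hbsu : b * Real.sqrt u = a := by rw [heq, hbsqc]
        have hulec : u ≤ c := heq.le
        have hmin : min (b * Real.sqrt u) a = a := by rw [hbsu]; exact min_self a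
        rw [hmin]
        have h1 : HasDerivWithinAt h (3/2 * a) (Set.Iic u) u := by
          rw [show (3:ℝ)/2 * a = 3/2 * (b * Real.sqrt u) by rw [hbsu]]
          apply ((curveDeriv u hu).hasDerivWithinAt (s := Set.Iic u)).congr
          · intro x hx
            rw [hdef', if_pos (le_trans hx hulec)]
          · rw [hdef', if_pos hulec]
        have h2 : HasDerivWithinAt h (3/2 * a) (Set.Ici u) u := by
          apply ((lineDeriv u).hasDerivWithinAt (s := Set.Ici u)).congr
          · intro x hx
            rcases eq_or_lt_of_le (Set.mem_Ici.mp hx) with rfl | hxu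
            · rw [hdef', if_pos hulec, heq, fc]
            · rw [hdef', if_neg (not_le.mpr (heq ▸ hxu))]
          · rw [hdef', if_pos hulec, heq, fc]
        have := h1.union h2
        rwa [Set.Iic_union_Ici, hasDerivWithinAt_univ] at this
      · -- u > c
        have hmin : min (b * Real.sqrt u) a = a := by
          apply min_eq_right
          have : Real.sqrt c ≤ Real.sqrt u := Real.sqrt_le_sqrt hgt.le
          rw [hsqc] at this
          calc a = b * (a/b) := by field_simp
            _ ≤ b * Real.sqrt u := by nlinarith
        rw [hmin]
        apply (lineDeriv u).congr_of_eventuallyEq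
        filter_upwards [Ioi_mem_nhds hgt] with x hx
        rw [hdef', if_neg (not_le.mpr hx)]
    have hcont : ContinuousOn h (Set.Ici 0) := by
      have : Continuous (fun u : ℝ => if u ≤ c then b * u ^ ((3:ℝ)/2)
          else (3/2) * a * u - a ^ 3 / (2 * b ^ 2)) := by
        apply Continuous.if_le
        · exact continuous_const.mul (Real.continuous_rpow_const (by norm_num))
        · exact (continuous_const.mul continuous_id).sub continuous_const
        · exact continuous_id
        · exact continuous_const
        · intro x hx; rw [hx, fc]
      exact (this.continuousOn).congr (fun x _ => hdef' x)
    have hint : interior (Set.Ici (0:ℝ)) = Set.Ioi 0 := interior_Ici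
    apply MonotoneOn.convexOn_of_deriv (convex_Ici 0) hcont
    · rw [hint]
      intro u hu
      exact ((hder u hu).differentiableAt).differentiableWithinAt
    · rw [hint]
      intro x hx y hy hxy
      rw [(hder x hx).deriv, (hder y hy).deriv]
      have : Real.sqrt x ≤ Real.sqrt y := Real.sqrt_le_sqrt hxy
      have : min (b * Real.sqrt x) a ≤ min (b * Real.sqrt y) a := by
        apply min_le_min _ le_rfl
        nlinarith
      linarith
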